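/- For every natural number n and every j ≥ 1, ∑_{i≥1} ⌊(⌊n/2^i⌋ + j)/(2j)⌋ = ⌊n/(2j)⌋. -/

import Mathlib

private lemma key_arith (j a b : ℕ) (hj : 1 ≤ j) (hb : b < 2) :
    a / (2 * j) + (a + j) / (2 * j) = (2 * a + b) / (2 * j) := by
  obtain ⟨q, r, hr, rfl⟩ : ∃ q r, r < 2 * j ∧ a = r + q * (2 * j) :=
    ⟨a / (2 * j), a % (2 * j), Nat.mod_lt _ (by omega), by
      rw [Nat.mod_add_div' a (2 * j)]⟩
  have h2j : 0 < 2 * j := by omega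
  have e1 : r + q * (2 * j) + j = (r + j) + q * (2 * j) := by ring
  have e2 : 2 * (r + q * (2 * j)) + b = (2 * r + b) + (2 * q) * (2 * j) := by ring
  rw [e1, e2, Nat.add_mul_div_right _ _ h2j, Nat.add_mul_div_right _ _ h2j,
    Nat.add_mul_div_right _ _ h2j, Nat.div_eq_of_lt hr]
  by_cases h : j ≤ r
  · have h1 : (r + j) / (2 * j) = 1 :=
      Nat.div_eq_of_lt_le (by omega) (by simp [Nat.succ_mul]; omega)
    have h2 : (2 * r + b) / (2 * j) = 1 :=
      Nat.div_eq_of_lt_le (by omega) (by simp [Nat.succ_mul]; omega)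
    omega
  · have h1 : (r + j) / (2 * j) = 0 := Nat.div_eq_of_lt (by omega)
    have h2 : (2 * r + b) / (2 * j) = 0 := Nat.div_eq_of_lt (by omega)
    omega

private lemma range_version (j : ℕ) (hj : 1 ≤ j) :
    ∀ m n : ℕ, n < 2 ^ m →
      ∑ i ∈ Finset.range m, (n / 2 ^ (i + 1) + j) / (2 * j) = n / (2 * j) := by
  intro m
  induction m with
  | zero => intro n hn; interval_cases n; simp
  | succ m ih =>
    intro n hn
    rw [Finset.sum_range_succ']
    have h1 : ∀ i, n / 2 ^ (i + 1 + 1) = (n / 2) / 2 ^ (i + 1) := by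
      intro i
      rw [Nat.div_div_eq_div_mul, ← pow_succ']
    simp only [h1]
    have h2 : n / 2 < 2 ^ m := by
      have : n < 2 ^ m * 2 := by rw [← pow_succ]; exact hn
      omega
    rw [ih (n / 2) h2]
    have hb : n % 2 < 2 := Nat.mod_lt _ (by omega)
    have := key_arith j (n / 2) (n % 2) hj hb
    have hn2 : 2 * (n / 2) + n % 2 = n := by omega
    rw [hn2] at this
    simpa [pow_one] using this

theorem sum_floor_div_shift (n j : ℕ) (hj : 1 ≤ j) :
    ∑ᶠ i : ℕ, (n / 2 ^ (i + 1) + j) / (2 * j) = n / (2 * j) := by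
  have hsupp : (Function.support fun i : ℕ => (n / 2 ^ (i + 1) + j) / (2 * j)) ⊆
      ↑(Finset.range n) := by
    intro i hi
    simp only [Function.mem_support] at hi
    simp only [Finset.coe_range, Set.mem_Iio]
    by_contra h
    push_neg at h
    have hpow : n < 2 ^ (i + 1) := by
      calc n ≤ i := h
        _ < 2 ^ (i + 1) := by
          have := @Nat.lt_two_pow_self i
          calc i < 2 ^ i := this
            _ < 2 ^ (i + 1) := Nat.pow_lt_pow_succ (by omega)
    have : n / 2 ^ (i + 1) = 0 := Nat.div_eq_of_lt hpow
    rw [this] at hi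
    exact hi (Nat.div_eq_of_lt (by omega))
  rw [finsum_eq_finset_sum_of_support_subset _ hsupp]
  exact range_version j hj n n (@Nat.lt_two_pow_self n)
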